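/- Let P and σ be a minimally balanced pair of binary strings of length k > 2. Then the strings obtained from P and from σ by deleting their first and last bits (i.e., the substrings consisting of bits 2 through k−1) are balanced: the number of 0's among bits 2,...,k−1 of P equals the number of 0's among bits 2,...,k−1 of σ. -/

import Mathlib

private lemma key_pos (k : ℕ) (hk : 2 < k) (f : ℕ → ℤ) (h0 : f 0 = 0) (hkk : f k = 0)
    (hstep : ∀ j, |f (j + 1) - f j| ≤ 1)
    (hnz : ∀ j, 1 ≤ j → j < k → f j ≠ 0) (h1 : f 1 = 1) : f (k - 1) = 1 := by
  have hpos : ∀ j, 1 ≤ j → j < k → 0 < f j := by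
    intro j
    induction j with
    | zero => omega
    | succ n ih =>
      intro _ hj
      rcases Nat.eq_zero_or_pos n with h | h
      · subst h; rw [h1]; norm_num
      · have h1n : 0 < f n := ih h (by omega)
        have hs := hstep n
        have hnzn := hnz (n + 1) (by omega) hj
        rw [abs_le] at hs
        omega
  have h1' : 0 < f (k - 1) := hpos (k - 1) (by omega) (by omega)
  have hs := hstep (k - 1)
  rw [show k - 1 + 1 = k by omega, hkk, abs_le] at hs
  omega

private lemma key (k : ℕ) (hk : 2 < k) (f : ℕ → ℤ) (h0 : f 0 = 0) (hkk : f k = 0)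
    (hstep : ∀ j, |f (j + 1) - f j| ≤ 1)
    (hnz : ∀ j, 1 ≤ j → j < k → f j ≠ 0) : f (k - 1) = f 1 := by
  have hs := hstep 0
  rw [h0, abs_le] at hs
  norm_num at hs
  have h1 := hnz 1 le_rfl (by omega)
  have : f 1 = 1 ∨ f 1 = -1 := by omega
  rcases this with h | h
  · rw [key_pos k hk f h0 hkk hstep hnz h, h]
  · have := key_pos k hk (fun j => -f j) (by simp [h0]) (by simp [hkk])
      (fun j => by rw [show -f (j+1) - -f j = -(f (j+1) - f j) by ring, abs_neg]; exact hstep j)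
      (fun j hj hjk => by simpa using hnz j hj hjk) (by simp [h])
    simp only [neg_eq_iff_eq_neg] at this
    rw [this, h]
  
theorem stmt_3 (k : ℕ) (hk : 2 < k) (P σ : List Bool)
    (hP : P.length = k) (hσ : σ.length = k)
    (hbal : P.count false = σ.count false)
    (hmin : ∀ j : ℕ, 1 ≤ j → j < k →
      (P.take j).count false ≠ (σ.take j).count false) :
    ((P.drop 1).take (k - 2)).count false = ((σ.drop 1).take (k - 2)).count false := by
  set f : ℕ → ℤ := fun j =>
    ((P.take j).count false : ℤ) - ((σ.take j).count false : ℤ) with hf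
  have hsplit : ∀ (L : List Bool) (m n : ℕ),
      (L.take (m + n)).count false
        = (L.take m).count false + ((L.drop m).take n).count false := by
    intro L m n
    rw [List.take_add, List.count_append]
  have hone : ∀ (L : List Bool) (j : ℕ), ((L.drop j).take 1).count false ≤ 1 := by
    intro L j
    calc ((L.drop j).take 1).count false ≤ ((L.drop j).take 1).length :=
          List.count_le_length
      _ ≤ 1 := by simpa using List.length_take_le 1 (L.drop j)
  have h0 : f 0 = 0 := by simp [hf]
  have hkk : f k = 0 := by
    simp [hf, List.take_of_length_le hP.le, List.take_of_length_le hσ.le, hbal]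
  have hstep : ∀ j, |f (j + 1) - f j| ≤ 1 := by
    intro j
    have h1 := hsplit P j 1
    have h2 := hsplit σ j 1
    have h3 := hone P j
    have h4 := hone σ j
    rw [abs_le]
    simp only [hf]
    constructor <;> push_cast <;> omega
  have hnz : ∀ j, 1 ≤ j → j < k → f j ≠ 0 := by
    intro j hj hjk
    have := hmin j hj hjk
    simp only [hf, sub_ne_zero]
    exact_mod_cast this
  have hmain := key k hk f h0 hkk hstep hnz
  have hPs := hsplit P 1 (k - 2)
  have hσs := hsplit σ 1 (k - 2)
  rw [show 1 + (k - 2) = k - 1 by omega] at hPs hσs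
  simp only [hf] at hmain
  rw [hPs, hσs] at hmain
  have h1 := hnz 1 le_rfl (by omega)
  push_cast at hmain
  omega
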